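/- Fix a positive integer q and an integer t with 0 ≤ t < 2^q. For a nonnegative integer k with binary digits a_j (k = Σ_{j≥0} a_j 2^j), the bit-reversal value y(k) = Σ_{j≥0} a_j 2^{-j-1} satisfies t·2^{-q} ≤ y(k) < (t+1)·2^{-q} if and only if k mod 2^q equals the fixed integer z = Σ_{j=0}^{q-1} b_j 2^j, where t·2^{-q} = Σ_{j=0}^{q-1} b_j 2^{-j-1} with b_j ∈ {0,1}. -/

import Mathlib

/-- The binary bit-reversal map: `k = Σ a_j 2^j ↦ Σ a_j 2^{-j-1}`. -/
noncomputable def vdcY (k : ℕ) : ℝ :=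
  ∑ j ∈ Finset.range k, ((k / 2 ^ j % 2 : ℕ) : ℝ) * ((2:ℝ)⁻¹) ^ (j + 1)

namespace Stmt9

/-- the `j`-th binary digit of `m` -/
def dig (m j : ℕ) : ℕ := m / 2 ^ j % 2

lemma dig_le (m j : ℕ) : dig m j ≤ 1 :=
  Nat.lt_succ_iff.mp (Nat.mod_lt _ (by norm_num))

lemma sum_bits (q m : ℕ) : ∑ j ∈ Finset.range q, dig m j * 2 ^ j = m % 2 ^ q := by
  induction q with
  | zero => simp [Nat.mod_one]
  | succ q ih =>
    rw [Finset.sum_range_succ, ih, pow_succ, Nat.mod_mul]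
    unfold dig
    ring

lemma sum_lt (q : ℕ) (b : ℕ → ℕ) (hb : ∀ j, b j ≤ 1) :
    ∑ j ∈ Finset.range q, b j * 2 ^ j < 2 ^ q := by
  induction q with
  | zero => simp
  | succ q ih =>
    rw [Finset.sum_range_succ]
    have h1 : b q * 2 ^ q ≤ 2 ^ q := by
      have := hb q; nlinarith [pow_pos (by norm_num : 0 < 2) q]
    have : (2:ℕ) ^ (q+1) = 2 ^ q + 2 ^ q := by ring
    omega

lemma dig_sum (q : ℕ) (b : ℕ → ℕ) (hb : ∀ j, b j ≤ 1) :
    ∀ i < q, dig (∑ j ∈ Finset.range q, b j * 2 ^ j) i = b i := by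
  induction q with
  | zero => intro i hi; omega
  | succ q ih =>
    intro i hi
    rw [Finset.sum_range_succ]
    rcases Nat.lt_or_ge i q with h | h
    · unfold dig
      have h2q : (2:ℕ) ^ q = 2 ^ (q - 1 - i) * 2 * 2 ^ i := by
        rw [mul_assoc, ← pow_succ']
        rw [← pow_add]
        congr 1
        omega
      rw [h2q, show ∀ S c : ℕ, S + b q * (c * 2 ^ i) = S + (b q * c) * 2 ^ i from
        fun S c => by ring]
      rw [Nat.add_mul_div_right _ _ (pow_pos (by norm_num) i)]
      rw [show b q * (2 ^ (q-1-i) * 2) = (b q * 2 ^ (q-1-i)) * 2 from by ring]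
      rw [Nat.add_mul_mod_self_right]
      exact ih i h
    · have hi' : i = q := by omega
      subst hi'
      unfold dig
      rw [Nat.add_mul_div_right _ _ (pow_pos (by norm_num) i)]
      rw [Nat.div_eq_of_lt (sum_lt i b hb)]
      have hbi := hb i
      omega

/-- bit-reversal of the lowest `q` digits -/
def rev (q m : ℕ) : ℕ := ∑ j ∈ Finset.range q, dig m j * 2 ^ (q - 1 - j)

lemma rev_eq (q m : ℕ) :
    rev q m = ∑ j ∈ Finset.range q, dig m (q - 1 - j) * 2 ^ j := by
  rw [rev, ← Finset.sum_range_reflect]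
  refine Finset.sum_congr rfl fun j hj => ?_
  have hj' : j < q := Finset.mem_range.mp hj
  congr 2
  omega

lemma rev_lt (q m : ℕ) : rev q m < 2 ^ q := by
  rw [rev_eq]; exact sum_lt q _ fun j => dig_le m _

lemma dig_rev (q m : ℕ) : ∀ i < q, dig (rev q m) i = dig m (q - 1 - i) := by
  intro i hi
  rw [rev_eq]
  exact dig_sum q _ (fun j => dig_le m _) i hi

lemma rev_inj (q m m' : ℕ) (hm : m < 2 ^ q) (hm' : m' < 2 ^ q)
    (h : rev q m = rev q m') : m = m' := by
  rcases Nat.eq_zero_or_pos q with rfl | hq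
  · simp at hm hm'; omega
  have hd : ∀ j < q, dig m j = dig m' j := by
    intro j hj
    have h1 := dig_rev q m (q - 1 - j) (by omega)
    have h2 := dig_rev q m' (q - 1 - j) (by omega)
    rw [h] at h1
    rw [show q - 1 - (q - 1 - j) = j from by omega] at h1 h2
    omega
  have e1 := sum_bits q m
  have e2 := sum_bits q m'
  rw [Nat.mod_eq_of_lt hm] at e1
  rw [Nat.mod_eq_of_lt hm'] at e2
  rw [← e1, ← e2]
  exact Finset.sum_congr rfl fun j hj => by rw [hd j (Finset.mem_range.mp hj)]

/-- low part of `vdcY` -/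
noncomputable def Lr (q m : ℕ) : ℝ :=
  ∑ j ∈ Finset.range q, ((dig m j : ℕ) : ℝ) * ((2:ℝ)⁻¹) ^ (j + 1)

lemma geo (q : ℕ) : ∀ M, q ≤ M →
    ∑ j ∈ Finset.Ico q M, ((2:ℝ)⁻¹) ^ (j + 1) = ((2:ℝ)⁻¹) ^ q - ((2:ℝ)⁻¹) ^ M := by
  refine Nat.le_induction ?_ ?_
  · simp
  · intro M hM ih
    rw [Finset.sum_Ico_succ_top hM, ih, pow_succ]
    ring

lemma vdcY_bounds (q k : ℕ) :
    Lr q k ≤ vdcY k ∧ vdcY k < Lr q k + ((2:ℝ)⁻¹) ^ q := by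
  set M := max k q with hM
  have hext : vdcY k = ∑ j ∈ Finset.range M, ((dig k j : ℕ) : ℝ) * ((2:ℝ)⁻¹) ^ (j + 1) := by
    rw [vdcY]
    refine Finset.sum_subset (Finset.range_subset_range.mpr (le_max_left _ _)) ?_
    intro j _ hj
    have hj' : k ≤ j := by simpa using hj
    have : k / 2 ^ j = 0 := Nat.div_eq_of_lt
      (lt_of_lt_of_le (Nat.lt_two_pow_self (n := k)) (pow_le_pow_right₀ (by norm_num) hj'))
    rw [this]
    simp
  have hsplit : ∑ j ∈ Finset.range M, ((dig k j : ℕ) : ℝ) * ((2:ℝ)⁻¹) ^ (j + 1)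
      = Lr q k + ∑ j ∈ Finset.Ico q M, ((dig k j : ℕ) : ℝ) * ((2:ℝ)⁻¹) ^ (j + 1) := by
    rw [Lr, Finset.range_eq_Ico, Finset.range_eq_Ico,
      ← Finset.sum_Ico_consecutive _ (Nat.zero_le q) (le_max_right k q)]
  have hT0 : 0 ≤ ∑ j ∈ Finset.Ico q M, ((dig k j : ℕ) : ℝ) * ((2:ℝ)⁻¹) ^ (j + 1) :=
    Finset.sum_nonneg fun j _ => mul_nonneg (Nat.cast_nonneg _) (by positivity)
  have hT1 : ∑ j ∈ Finset.Ico q M, ((dig k j : ℕ) : ℝ) * ((2:ℝ)⁻¹) ^ (j + 1)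
      < ((2:ℝ)⁻¹) ^ q := by
    calc ∑ j ∈ Finset.Ico q M, ((dig k j : ℕ) : ℝ) * ((2:ℝ)⁻¹) ^ (j + 1)
        ≤ ∑ j ∈ Finset.Ico q M, ((2:ℝ)⁻¹) ^ (j + 1) := by
          refine Finset.sum_le_sum fun j _ => ?_
          have h1 : ((dig k j : ℕ) : ℝ) ≤ 1 := by exact_mod_cast dig_le k j
          nlinarith [pow_pos (by norm_num : (0:ℝ) < 2⁻¹) (j+1)]
      _ = ((2:ℝ)⁻¹) ^ q - ((2:ℝ)⁻¹) ^ M := geo q M (le_max_right k q)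
      _ < ((2:ℝ)⁻¹) ^ q := by
          have : (0:ℝ) < ((2:ℝ)⁻¹) ^ M := by positivity
          linarith
  constructor
  · rw [hext, hsplit]; linarith
  · rw [hext, hsplit]; linarith

lemma dig_mod (q k j : ℕ) (hj : j < q) : dig (k % 2 ^ q) j = dig k j := by
  unfold dig
  have h2q : (2:ℕ) ^ q = 2 ^ j * 2 ^ (q - j) := by rw [← pow_add]; congr 1; omega
  rw [h2q, Nat.mod_mul_right_div_self,
    Nat.mod_mod_of_dvd _ (dvd_pow_self 2 (by omega : q - j ≠ 0))]

lemma Lr_mod (q k : ℕ) : Lr q (k % 2 ^ q) = Lr q k := by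
  refine Finset.sum_congr rfl fun j hj => ?_
  rw [dig_mod q k j (Finset.mem_range.mp hj)]

lemma Lr_eq_rev (q m : ℕ) : Lr q m = ((rev q m : ℕ) : ℝ) * ((2:ℝ) ^ q)⁻¹ := by
  rw [rev]
  push_cast
  rw [Finset.sum_mul]
  refine Finset.sum_congr rfl fun j hj => ?_
  have hj' : j < q := Finset.mem_range.mp hj
  have hq : (2:ℝ) ^ q = 2 ^ (q - 1 - j) * 2 ^ (j + 1) := by
    rw [← pow_add]; congr 1; omega
  have h2 : ((2:ℝ)⁻¹) ^ (j+1) = ((2:ℝ) ^ (j+1))⁻¹ := by rw [inv_pow]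
  rw [hq, h2, mul_assoc]
  congr 1
  have hne : (2:ℝ) ^ (j+1) ≠ 0 := by positivity
  have hne2 : (2:ℝ) ^ (q - 1 - j) ≠ 0 := by positivity
  field_simp

end Stmt9

open Stmt9 in
/-- The bit-reversal value `y(k)` lies in the canonical interval
`[t·2^{-q}, (t+1)·2^{-q})` iff `k mod 2^q` equals the fixed integer
`z = Σ_{j<q} b_j 2^j`, where the `b_j ∈ {0,1}` are the digits with
`t·2^{-q} = Σ_{j<q} b_j 2^{-j-1}`. -/
theorem stmt_9 (q t : ℕ) (hq : 1 ≤ q) (ht : t < 2 ^ q)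
    (b : ℕ → ℕ) (hb : ∀ j, b j ≤ 1)
    (htb : (t : ℝ) * ((2:ℝ) ^ q)⁻¹ =
      ∑ j ∈ Finset.range q, (b j : ℝ) * ((2:ℝ)⁻¹) ^ (j + 1))
    (k : ℕ) :
    ((t : ℝ) * ((2:ℝ) ^ q)⁻¹ ≤ vdcY k ∧
        vdcY k < ((t : ℝ) + 1) * ((2:ℝ) ^ q)⁻¹) ↔
      k % 2 ^ q = ∑ j ∈ Finset.range q, b j * 2 ^ j := by
  set z := ∑ j ∈ Finset.range q, b j * 2 ^ j with hz
  have hzlt : z < 2 ^ q := sum_lt q b hb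
  have hLz : Lr q z = (t : ℝ) * ((2:ℝ) ^ q)⁻¹ := by
    rw [htb, Lr]
    refine Finset.sum_congr rfl fun j hj => ?_
    rw [dig_sum q b hb j (Finset.mem_range.mp hj)]
  have htz : t = rev q z := by
    have h := hLz
    rw [Lr_eq_rev] at h
    have hpos : (0:ℝ) < ((2:ℝ) ^ q)⁻¹ := by positivity
    have : ((rev q z : ℕ) : ℝ) = (t : ℝ) :=
      mul_right_cancel₀ (ne_of_gt hpos) h
    exact_mod_cast this.symm
  set N := rev q (k % 2 ^ q) with hN
  have hLk : Lr q k = (N : ℝ) * ((2:ℝ) ^ q)⁻¹ := by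
    rw [← Lr_mod, Lr_eq_rev]
  have hinv : ((2:ℝ)⁻¹) ^ q = ((2:ℝ) ^ q)⁻¹ := by rw [inv_pow]
  obtain ⟨hlo, hhi⟩ := vdcY_bounds q k
  rw [hLk] at hlo hhi
  rw [hinv] at hhi
  have hpos : (0:ℝ) < ((2:ℝ) ^ q)⁻¹ := by positivity
  constructor
  · rintro ⟨h1, h2⟩
    have hNt : N < t + 1 := by
      have : (N : ℝ) * ((2:ℝ) ^ q)⁻¹ < ((t:ℝ) + 1) * ((2:ℝ) ^ q)⁻¹ := lt_of_le_of_lt hlo h2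
      have := lt_of_mul_lt_mul_right (by linarith [this] : (N:ℝ) * ((2:ℝ)^q)⁻¹ < ((t:ℝ)+1) * ((2:ℝ)^q)⁻¹) (le_of_lt hpos)
      exact_mod_cast this
    have htN : t < N + 1 := by
      have h3 : (t : ℝ) * ((2:ℝ) ^ q)⁻¹ < ((N:ℝ) + 1) * ((2:ℝ) ^ q)⁻¹ := by
        calc (t : ℝ) * ((2:ℝ) ^ q)⁻¹ ≤ vdcY k := h1
          _ < (N : ℝ) * ((2:ℝ) ^ q)⁻¹ + ((2:ℝ) ^ q)⁻¹ := hhi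
          _ = ((N:ℝ) + 1) * ((2:ℝ) ^ q)⁻¹ := by ring
      have := lt_of_mul_lt_mul_right h3 (le_of_lt hpos)
      exact_mod_cast this
    have : N = t := by omega
    exact rev_inj q (k % 2 ^ q) z (Nat.mod_lt _ (by positivity)) hzlt
      (by rw [← hN, this, htz])
  · intro hkz
    have hNt : N = t := by rw [hN, hkz, ← htz]
    rw [hNt] at hlo hhi
    constructor
    · exact hlo
    · calc vdcY k < (t : ℝ) * ((2:ℝ) ^ q)⁻¹ + ((2:ℝ) ^ q)⁻¹ := hhi
        _ = ((t:ℝ) + 1) * ((2:ℝ) ^ q)⁻¹ := by ring
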